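/- Under the heat-matrix assumptions with zero sources, fix k ≥ 1 and define the one-timestep map S_h : ℝ^N → ℝ^N by letting S_h(u) be the k-stage constant-neighbour update computed from initial vector u (i.e., S_h(u) = (F_{h,u})^{∘k}(u), where F_{h,u}(v)_i = u_i e^{M_ii h} + (Σ_{j≠i} M_ij v_j /(−M_ii))(1 − e^{M_ii h})). Then for every number of timesteps n ≥ 0, every step size h > 0 and every index i, min_j u⁰_j ≤ (S_h^{∘n}(u⁰))_i ≤ max_j u⁰_j; in particular the method satisfies the maximum and minimum principles and is unconditionally stable: the computed values remain bounded by the initial extremes for arbitrarily large h. -/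

import Mathlib

open Finset NormedSpace Asymptotics

/-- `aCoef M Q v i = Σ_{j≠i} M_ij v_j + Q_i`. -/
noncomputable def aCoef {N : ℕ} (M : Matrix (Fin N) (Fin N) ℝ) (Q : Fin N → ℝ)
    (v : Fin N → ℝ) (i : Fin N) : ℝ :=
  (∑ j ∈ Finset.univ.erase i, M i j * v j) + Q i

/-- The constant-neighbour step `F_h`. -/
noncomputable def cnStep {N : ℕ} (M : Matrix (Fin N) (Fin N) ℝ) (Q u0 : Fin N → ℝ)
    (h : ℝ) (v : Fin N → ℝ) : Fin N → ℝ :=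
  fun i => u0 i * Real.exp (M i i * h)
    + (aCoef M Q v i / (-(M i i))) * (1 - Real.exp (M i i * h))

/-- The `k`-stage constant-neighbour approximation `CN_k(h) = F_h^[k] u⁰`. -/
noncomputable def CN {N : ℕ} (M : Matrix (Fin N) (Fin N) ℝ) (Q u0 : Fin N → ℝ)
    (k : ℕ) (h : ℝ) : Fin N → ℝ :=
  (cnStep M Q u0 h)^[k] u0

/-- The effective slope `s_i(v) = (a_i(v) − a_i(u⁰))/h`. -/
noncomputable def sCoef {N : ℕ} (M : Matrix (Fin N) (Fin N) ℝ) (Q u0 : Fin N → ℝ)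
    (h : ℝ) (v : Fin N → ℝ) (i : Fin N) : ℝ :=
  (aCoef M Q v i - aCoef M Q u0 i) / h

/-- The linear-neighbour step `G_h`, with `τ_i = −1/M_ii`. -/
noncomputable def lnStep {N : ℕ} (M : Matrix (Fin N) (Fin N) ℝ) (Q u0 : Fin N → ℝ)
    (h : ℝ) (v : Fin N → ℝ) : Fin N → ℝ :=
  fun i =>
    u0 i * Real.exp (M i i * h)
      + (aCoef M Q u0 i * (-(M i i)⁻¹) - sCoef M Q u0 h v i * (-(M i i)⁻¹) ^ 2)
          * (1 - Real.exp (M i i * h))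
      + sCoef M Q u0 h v i * (-(M i i)⁻¹) * h

/-- The `k`-stage linear-neighbour approximation `LN_k(h) = G_h^[k−1] (CN_1(h))`, `k ≥ 2`. -/
noncomputable def LN {N : ℕ} (M : Matrix (Fin N) (Fin N) ℝ) (Q u0 : Fin N → ℝ)
    (k : ℕ) (h : ℝ) : Fin N → ℝ :=
  (lnStep M Q u0 h)^[k - 1] (cnStep M Q u0 h u0)

/-- The exact solution `u_ex(h) = e^{hM} u⁰ + ∫₀^h e^{(h−s)M} Q ds`. -/
noncomputable def uex {N : ℕ} (M : Matrix (Fin N) (Fin N) ℝ) (Q u0 : Fin N → ℝ)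
    (h : ℝ) : Fin N → ℝ :=
  (exp (h • M)).mulVec u0 + ∫ s in (0:ℝ)..h, (exp ((h - s) • M)).mulVec Q

/-- One full timestep of the `k`-stage constant-neighbour scheme: the current values
`u` play the role of the initial values in the stage map. -/
noncomputable def cnTimestep {N : ℕ} (M : Matrix (Fin N) (Fin N) ℝ) (k : ℕ) (h : ℝ)
    (u : Fin N → ℝ) : Fin N → ℝ :=
  (cnStep M (0 : Fin N → ℝ) u h)^[k] u

/-- Unconditional stability / maximum and minimum principles: under the heat-matrix
assumptions with zero sources, for every number of timesteps `n`, every step size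
`h > 0` and every index `i`, the value computed by `n` timesteps of the `k`-stage
constant-neighbour method stays between the initial extremes. -/
lemma cnStep_pres {N : ℕ} (M : Matrix (Fin N) (Fin N) ℝ)
    (hoff : ∀ i j, j ≠ i → 0 ≤ M i j)
    (hrow : ∀ i, ∑ j, M i j = 0)
    (hdiag : ∀ i, M i i < 0)
    {h : ℝ} (hh : 0 < h) (lo hi : ℝ) (u v : Fin N → ℝ)
    (hu : ∀ j, lo ≤ u j ∧ u j ≤ hi) (hv : ∀ j, lo ≤ v j ∧ v j ≤ hi) :
    ∀ i, lo ≤ cnStep M (0 : Fin N → ℝ) u h v i ∧ cnStep M (0 : Fin N → ℝ) u h v i ≤ hi := by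
  intro i
  have hsum : ∑ j ∈ Finset.univ.erase i, M i j = -(M i i) := by
    have := hrow i
    have h2 : M i i + ∑ j ∈ Finset.univ.erase i, M i j = ∑ j, M i j :=
      Finset.add_sum_erase _ _ (Finset.mem_univ i)
    linarith
  have hMpos : 0 < -(M i i) := by linarith [hdiag i]
  have ha : aCoef M (0 : Fin N → ℝ) v i = ∑ j ∈ Finset.univ.erase i, M i j * v j := by
    simp [aCoef]
  have hub : aCoef M (0 : Fin N → ℝ) v i ≤ (-(M i i)) * hi := by
    rw [ha, ← hsum, Finset.sum_mul]
    exact Finset.sum_le_sum fun j hj =>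
      mul_le_mul_of_nonneg_left (hv j).2 (hoff i j (Finset.ne_of_mem_erase hj))
  have hlb : (-(M i i)) * lo ≤ aCoef M (0 : Fin N → ℝ) v i := by
    rw [ha, ← hsum, Finset.sum_mul]
    exact Finset.sum_le_sum fun j hj =>
      mul_le_mul_of_nonneg_left (hv j).1 (hoff i j (Finset.ne_of_mem_erase hj))
  have hc1 : lo ≤ aCoef M (0 : Fin N → ℝ) v i / (-(M i i)) :=
    (le_div_iff₀ hMpos).2 (by linarith)
  have hc2 : aCoef M (0 : Fin N → ℝ) v i / (-(M i i)) ≤ hi :=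
    (div_le_iff₀ hMpos).2 (by linarith)
  have he1 : 0 < Real.exp (M i i * h) := Real.exp_pos _
  have he2 : Real.exp (M i i * h) < 1 := by
    rw [Real.exp_lt_one_iff]; exact mul_neg_of_neg_of_pos (hdiag i) hh
  obtain ⟨hu1, hu2⟩ := hu i
  constructor <;> simp only [cnStep] <;> nlinarith

theorem cn_method_unconditionally_stable {N : ℕ} (hN : 1 ≤ N)
    (M : Matrix (Fin N) (Fin N) ℝ)
    (hoff : ∀ i j, j ≠ i → 0 ≤ M i j)
    (hrow : ∀ i, ∑ j, M i j = 0)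
    (hdiag : ∀ i, M i i < 0)
    (u0 : Fin N → ℝ) (k : ℕ) (hk : 1 ≤ k) :
    ∀ (n : ℕ) (h : ℝ), 0 < h → ∀ i : Fin N,
      Finset.univ.inf' ⟨⟨0, hN⟩, Finset.mem_univ _⟩ u0
          ≤ (cnTimestep M k h)^[n] u0 i ∧
        (cnTimestep M k h)^[n] u0 i
          ≤ Finset.univ.sup' ⟨⟨0, hN⟩, Finset.mem_univ _⟩ u0 := by
  
  intro n h hh i
  set lo := Finset.univ.inf' ⟨⟨0, hN⟩, Finset.mem_univ _⟩ u0 with hlo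
  set hi := Finset.univ.sup' ⟨⟨0, hN⟩, Finset.mem_univ _⟩ u0 with hhi
  suffices H : ∀ j, lo ≤ (cnTimestep M k h)^[n] u0 j ∧ (cnTimestep M k h)^[n] u0 j ≤ hi from
    H i
  have step : ∀ u : Fin N → ℝ, (∀ j, lo ≤ u j ∧ u j ≤ hi) →
      ∀ j, lo ≤ cnTimestep M k h u j ∧ cnTimestep M k h u j ≤ hi := by
    intro u hu
    have key : ∀ m, ∀ j, lo ≤ (cnStep M (0 : Fin N → ℝ) u h)^[m] u j ∧
        (cnStep M (0 : Fin N → ℝ) u h)^[m] u j ≤ hi := by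
      intro m
      induction m with
      | zero => simpa using hu
      | succ m ih =>
        rw [Function.iterate_succ_apply']
        exact cnStep_pres M hoff hrow hdiag hh lo hi u _ hu ih
    exact key k
  induction n with
  | zero =>
    intro j
    exact ⟨Finset.inf'_le _ (Finset.mem_univ j), Finset.le_sup' _ (Finset.mem_univ j)⟩
  | succ n ih =>
    rw [Function.iterate_succ_apply']
    exact step _ ih
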